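/- On the elliptic curve E : y^2 - 22029701·xy + 72328851024410157777600·y = x^3 over Q, the point P = (1945448965660200, 72328851024410157777600) has order exactly 6, and 2P = (0,0) (which therefore has order exactly 3). -/

import Mathlib

def E : WeierstrassCurve.Affine ℚ :=
  ⟨-22029701, 0, 72328851024410157777600, 0, 0⟩

open WeierstrassCurve.Affine

lemma some_congr {W : WeierstrassCurve.Affine ℚ} {x₁ y₁ x₂ y₂ : ℚ}
    {h₁ : W.Nonsingular x₁ y₁} {h₂ : W.Nonsingular x₂ y₂} (hx : x₁ = x₂) (hy : y₁ = y₂) :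
    Point.some _ _ h₁ = Point.some _ _ h₂ := by subst hx; subst hy; rfl

lemma hP : E.Nonsingular 1945448965660200 72328851024410157777600 := by
  rw [nonsingular_iff, equation_iff]
  norm_num [E]

lemma hO : E.Nonsingular 0 0 := by
  rw [nonsingular_iff, equation_iff]
  norm_num [E]

lemma hN : E.Nonsingular 0 (-72328851024410157777600) := by
  rw [nonsingular_iff, equation_iff]
  norm_num [E]

lemma h3 : E.Nonsingular (-1382239969966144) (-51389592136506645110272) := by
  rw [nonsingular_iff, equation_iff]
  norm_num [E]

lemma hyP : (72328851024410157777600 : ℚ) ≠ E.negY 1945448965660200 72328851024410157777600 := by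
  norm_num [negY, E]

lemma e1 : Point.some _ _ hP + Point.some _ _ hP = Point.some _ _ hO := by
  rw [Point.add_of_Y_ne hyP]
  exact some_congr (by rw [slope_of_Y_ne rfl hyP]; norm_num [addX, negY, E])
    (by rw [slope_of_Y_ne rfl hyP]; norm_num [addY, negAddY, addX, negY, E])

lemma e2 : Point.some _ _ hO + Point.some _ _ hP = Point.some _ _ h3 := by
  have hx : (0 : ℚ) ≠ 1945448965660200 := by norm_num
  rw [Point.add_of_X_ne hx]
  exact some_congr (by rw [slope_of_X_ne hx]; norm_num [addX, negY, E])
    (by rw [slope_of_X_ne hx]; norm_num [addY, negAddY, addX, negY, E])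

lemma e3 : Point.some _ _ h3 + Point.some _ _ h3 = 0 :=
  Point.add_of_Y_eq rfl (by norm_num [negY, E])

lemma e4 : Point.some _ _ hO + Point.some _ _ hO = Point.some _ _ hN := by
  have hy : (0 : ℚ) ≠ E.negY 0 0 := by norm_num [negY, E]
  rw [Point.add_of_Y_ne hy]
  exact some_congr (by rw [slope_of_Y_ne rfl hy]; norm_num [addX, negY, E])
    (by rw [slope_of_Y_ne rfl hy]; norm_num [addY, negAddY, addX, negY, E])

lemma e5 : Point.some _ _ hN + Point.some _ _ hO = 0 :=
  Point.add_of_Y_eq rfl (by norm_num [negY, E])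

lemma some_ne_zero {W : WeierstrassCurve.Affine ℚ} {x y : ℚ} (h : W.Nonsingular x y) :
    Point.some _ _ h ≠ 0 := fun hc => by cases hc

/-- On the rank-9 record curve with torsion `ℤ/6ℤ`, the point
`P = (1945448965660200, 72328851024410157777600)` has order exactly 6, and `2P = (0,0)`,
which has order exactly 3. -/
theorem order_six_and_double :
    ∃ h : E.Nonsingular 1945448965660200 72328851024410157777600,
      ∃ h0 : E.Nonsingular 0 0,
        addOrderOf (WeierstrassCurve.Affine.Point.some _ _ h) = 6 ∧
        (2 : ℤ) • WeierstrassCurve.Affine.Point.some _ _ h = WeierstrassCurve.Affine.Point.some _ _ h0 ∧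
        addOrderOf (WeierstrassCurve.Affine.Point.some _ _ h0) = 3 := by
  refine ⟨hP, hO, ?_, ?_, ?_⟩
  · have h2 : (2 : ℕ) • Point.some _ _ hP = Point.some _ _ hO := by rw [two_nsmul, e1]
    have h3' : (3 : ℕ) • Point.some _ _ hP = Point.some _ _ h3 := by
      rw [show (3 : ℕ) = 2 + 1 by rfl, add_nsmul, h2, one_nsmul, e2]
    have h6 : (6 : ℕ) • Point.some _ _ hP = 0 := by
      rw [show (6 : ℕ) = 3 + 3 by rfl, add_nsmul, h3', e3]
    have hd : addOrderOf (Point.some _ _ hP) ∣ 6 := addOrderOf_dvd_of_nsmul_eq_zero h6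
    have h2ne : (2 : ℕ) • Point.some _ _ hP ≠ 0 := by rw [h2]; exact some_ne_zero hO
    have h3ne : (3 : ℕ) • Point.some _ _ hP ≠ 0 := by rw [h3']; exact some_ne_zero h3
    have h1ne : Point.some _ _ hP ≠ 0 := some_ne_zero hP
    have hub : addOrderOf (Point.some _ _ hP) ≤ 6 := Nat.le_of_dvd (by norm_num) hd
    have hlb : 1 ≤ addOrderOf (Point.some _ _ hP) := Nat.one_le_iff_ne_zero.mpr fun hz => by
      simp [hz] at hd
    interval_cases h : addOrderOf (Point.some _ _ hP)
    · exact absurd (AddMonoid.addOrderOf_eq_one_iff.mp h) h1ne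
    · exact absurd (h ▸ addOrderOf_nsmul_eq_zero (Point.some _ _ hP)) h2ne
    · exact absurd (h ▸ addOrderOf_nsmul_eq_zero (Point.some _ _ hP)) h3ne
    · exact absurd hd (by norm_num)
    · exact absurd hd (by norm_num)
    · rfl
  · rw [two_zsmul, e1]
  · have h3O : (3 : ℕ) • Point.some _ _ hO = 0 := by
      rw [show (3 : ℕ) = 2 + 1 by rfl, add_nsmul, two_nsmul, e4, one_nsmul, e5]
    have := Fact.mk Nat.prime_three
    exact addOrderOf_eq_prime h3O (some_ne_zero hO)
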